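/- Let k ≥ 1 be an odd integer and let x₁,…,x_{2k} be integers whose sum S = x₁ + ⋯ + x_{2k} is even. Then there exist a positive integer M ≥ 2 and integers a₁,…,a_{2k} with gcd(aᵢ, M) = 1 for every i, such that for all positive integers N₁,…,N_{2k} satisfying Nᵢ ≡ aᵢ (mod M) the following three conditions hold: (i) for every nonempty subset I ⊆ {1,…,2k} with #I ≤ k, gcd(2·∏_{i∈I} Nᵢ + 1, M) = 1 if and only if #I = k and ∑_{i∈I} xᵢ = S/2; (ii) for every i = 1,…,2k, Nᵢ − 1 does not divide 4·N₁⋯N_{2k}; (iii) gcd(2·N₁⋯N_{2k} + 1, M) > 1 and gcd(4·N₁⋯N_{2k} + 1, M) > 1. -/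

import Mathlib

open Finset

/-- Sum of `2^i` over a finset of `Fin K`. -/
def msum {K : ℕ} (J : Finset (Fin K)) : ℕ := ∑ i ∈ J, 2 ^ (i : ℕ)

lemma msum_injective {K : ℕ} : Function.Injective (msum (K := K)) := by
  intro J J' h
  have h2 : ∀ J : Finset (Fin K), msum J = ∑ i ∈ J.map Fin.valEmbedding, 2 ^ i := by
    intro J; rw [Finset.sum_map]; rfl
  rw [h2, h2] at h
  have := Finset.geomSum_injective (le_refl 2) h
  exact Finset.map_injective _ this

lemma msum_lt {K : ℕ} (J : Finset (Fin K)) : msum J < 2 ^ K := by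
  have h1 : msum J ≤ msum (Finset.univ : Finset (Fin K)) :=
    Finset.sum_le_sum_of_subset (Finset.subset_univ J)
  have h2 : msum (Finset.univ : Finset (Fin K)) = ∑ i ∈ Finset.range K, 2 ^ i := by
    rw [msum, ← Fin.sum_univ_eq_sum_range]
  have h3 : ∀ n : ℕ, (∑ i ∈ Finset.range n, 2 ^ i) + 1 = 2 ^ n := by
    intro n
    induction n with
    | zero => simp
    | succ n ih => rw [Finset.sum_range_succ, pow_succ]; omega
  have := h3 K
  omega

/-- Two-modulus CRT for integers. -/
lemma crt_two {m n : ℕ} (h : Nat.Coprime m n) (x A : ℤ) :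
    ∃ B : ℤ, B ≡ x [ZMOD (m : ℤ)] ∧ B ≡ A [ZMOD (n : ℤ)] := by
  have hg : Int.gcd (m : ℤ) (n : ℤ) = 1 := by simpa [Int.gcd] using h
  have hb := Int.gcd_eq_gcd_ab (m : ℤ) (n : ℤ)
  rw [hg] at hb
  set u := Int.gcdA (m : ℤ) (n : ℤ)
  set v := Int.gcdB (m : ℤ) (n : ℤ)
  refine ⟨A * ((m : ℤ) * u) + x * ((n : ℤ) * v), ?_, ?_⟩
  · refine Int.modEq_iff_dvd.2 ⟨u * (x - A), ?_⟩
    push_cast at hb ⊢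
    linear_combination x * hb
  · refine Int.modEq_iff_dvd.2 ⟨v * (A - x), ?_⟩
    push_cast at hb ⊢
    linear_combination A * hb

/-- CRT over a finite family of pairwise coprime moduli. -/
lemma crt_finset {ι : Type*} [DecidableEq ι] (t : Finset ι) (m : ι → ℕ)
    (hco : ∀ i ∈ t, ∀ j ∈ t, i ≠ j → Nat.Coprime (m i) (m j)) (v : ι → ℤ) :
    ∃ A : ℤ, ∀ i ∈ t, A ≡ v i [ZMOD (m i : ℤ)] := by
  induction t using Finset.induction_on with
  | empty => exact ⟨0, by simp⟩
  | @insert j s hj ih =>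
    obtain ⟨A, hA⟩ := ih (fun i hi j' hj' hne =>
      hco i (Finset.mem_insert_of_mem hi) j' (Finset.mem_insert_of_mem hj') hne)
    have hcop : Nat.Coprime (m j) (∏ i ∈ s, m i) :=
      Nat.Coprime.prod_right (fun i hi =>
        hco j (Finset.mem_insert_self j s) i (Finset.mem_insert_of_mem hi)
          (fun he => hj (he ▸ hi)))
    obtain ⟨B, hB1, hB2⟩ := crt_two hcop (v j) A
    refine ⟨B, fun i hi => ?_⟩
    rcases Finset.mem_insert.1 hi with rfl | hi
    · exact hB1
    · have hdvd : ((m i : ℤ)) ∣ ((∏ i ∈ s, m i : ℕ) : ℤ) := by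
        exact_mod_cast Int.natCast_dvd_natCast.2 (Finset.dvd_prod_of_mem m hi)
      exact (Int.ModEq.of_dvd hdvd hB2).trans (hA i hi)

lemma neg_inv_two_not_square (p : ℕ) [hf : Fact p.Prime] (h8 : p % 8 = 5) :
    ¬ IsSquare (-(2⁻¹) : ZMod p) := by
  have hp := hf.out
  have hp2 : p ≠ 2 := by omega
  have h2ne : (2 : ZMod p) ≠ 0 := by
    have : ((2 : ℕ) : ZMod p) ≠ 0 := by
      rw [Ne, ZMod.natCast_eq_zero_iff]
      intro hd
      have := Nat.le_of_dvd (by norm_num) hd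
      omega
    simpa using this
  have hs1 : IsSquare (-1 : ZMod p) := by
    rw [ZMod.exists_sq_eq_neg_one_iff]
    have : p % 4 = p % 8 % 4 := (Nat.mod_mod_of_dvd p (by norm_num)).symm
    omega
  have hs2 : ¬ IsSquare (2 : ZMod p) := by
    rw [ZMod.exists_sq_eq_two_iff hp2]
    omega
  intro hsq
  have h3 : IsSquare ((-1 : ZMod p) * (-(2⁻¹))) := hs1.mul hsq
  have h4 : ((-1 : ZMod p) * (-(2⁻¹))) = 2⁻¹ := by ring
  rw [h4] at h3
  obtain ⟨b, hb⟩ := h3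
  have hbne : b ≠ 0 := by
    intro h0; rw [h0, mul_zero] at hb
    exact (inv_ne_zero h2ne) hb
  exact hs2 ⟨b⁻¹, by rw [← mul_inv]; rw [← hb]; rw [inv_inv]⟩

lemma local_residues {K : ℕ} (p : ℕ) (hp : p.Prime) (h8 : p % 8 = 5)
    (hbig : 2 ^ (K + 1) < p) (I : Finset (Fin K)) (hI : I.Nonempty) :
    ∃ b : Fin K → ZMod p,
      (∀ i, b i ≠ 0) ∧ (2 * ∏ i ∈ I, b i + 1 = 0) ∧
      (∀ J : Finset (Fin K), J ≠ I → 2 * ∏ i ∈ J, b i + 1 ≠ 0) := by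
  haveI : Fact p.Prime := ⟨hp⟩
  have hp2 : p ≠ 2 := by omega
  have h2ne : (2 : ZMod p) ≠ 0 := by
    have : ((2 : ℕ) : ZMod p) ≠ 0 := by
      rw [Ne, ZMod.natCast_eq_zero_iff]
      intro hd
      have := Nat.le_of_dvd (by norm_num) hd
      have h5 : 2 ^ (K + 1) ≥ 2 := by
        have := Nat.one_le_two_pow (n := K)
        calc (2:ℕ) = 2^1 := by norm_num
        _ ≤ 2 ^ (K+1) := Nat.pow_le_pow_right (by norm_num) (by omega)
      omega
    simpa using this
  -- generator
  obtain ⟨h, hh⟩ := IsCyclic.exists_generator (α := (ZMod p)ˣ)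
  have hordh : orderOf h = p - 1 := by
    rw [orderOf_eq_card_of_forall_mem_zpowers hh, Nat.card_eq_fintype_card, ZMod.card_units]
  set r : (ZMod p)ˣ := h ^ 2 with hr
  have hordr : orderOf r = (p - 1) / 2 := by
    rw [hr, orderOf_pow, hordh]
    congr 1
    have h2d : 2 ∣ p - 1 := by omega
    exact Nat.gcd_eq_right h2d
  have h2K : (2 : ℕ) ^ K ≤ orderOf r := by
    rw [hordr]
    have hps : 2 ^ K * 2 ≤ p - 1 := by
      have : 2 ^ (K + 1) = 2 ^ K * 2 := pow_succ 2 K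
      omega
    exact (Nat.le_div_iff_mul_le (by norm_num)).2 hps
  obtain ⟨i₀, hi₀⟩ := hI
  have hc2 : Nat.Coprime 2 p := by
    rw [Nat.coprime_comm]
    refine (hp.coprime_iff_not_dvd).2 fun hdvd => ?_
    have := Nat.le_of_dvd (by norm_num) hdvd
    omega
  set u2 : (ZMod p)ˣ := ZMod.unitOfCoprime 2 hc2 with hu2
  set c : (ZMod p)ˣ := -(u2⁻¹) with hc
  set bu : Fin K → (ZMod p)ˣ := fun i =>
    if i = i₀ then c * (r ^ msum (I.erase i₀))⁻¹ else r ^ (2 ^ (i : ℕ)) with hbu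
  have hcval : ((c : ZMod p)) = -(2⁻¹) := by
    rw [hc, hu2]
    push_cast
    rw [ZMod.coe_unitOfCoprime]
    push_cast
    rfl
  have h2c : (2 : ZMod p) * (c : ZMod p) + 1 = 0 := by
    rw [hcval, mul_neg, mul_inv_cancel₀ h2ne]; ring
  have hprod : ∀ J : Finset (Fin K), i₀ ∉ J → ∏ i ∈ J, bu i = r ^ msum J := by
    intro J hJ
    rw [Finset.prod_congr rfl (fun i hi => show bu i = r ^ (2 ^ (i:ℕ)) from
      if_neg (by rintro rfl; exact hJ hi)), Finset.prod_pow_eq_pow_sum]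
    rfl
  have hprod' : ∀ J, i₀ ∈ J →
      ∏ i ∈ J, bu i = c * (r ^ msum (I.erase i₀))⁻¹ * r ^ msum (J.erase i₀) := by
    intro J hJ
    rw [← Finset.mul_prod_erase J bu hJ, hprod _ (Finset.notMem_erase i₀ J)]
    congr 1
    exact if_pos rfl
  have hval : ∀ J : Finset (Fin K), (∏ i ∈ J, ((bu i : ZMod p))) = ((∏ i ∈ J, bu i : (ZMod p)ˣ) : ZMod p) := by
    intro J
    exact (map_prod (Units.coeHom (ZMod p)) bu J).symm
  refine ⟨fun i => (bu i : ZMod p), fun i => Units.ne_zero _, ?_, ?_⟩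
  · rw [hval, hprod' I hi₀, inv_mul_cancel_right]
    exact h2c
  · intro J hJI heq
    rw [hval] at heq
    by_cases hm : i₀ ∈ J
    · rw [hprod' J hm] at heq
      have : ((c : ZMod p)) * (((r ^ msum (I.erase i₀))⁻¹ * r ^ msum (J.erase i₀) : (ZMod p)ˣ) : ZMod p) = ((c * ((r ^ msum (I.erase i₀))⁻¹ * r ^ msum (J.erase i₀)) : (ZMod p)ˣ) : ZMod p) := by
        push_cast; ring
      have heq2 : (2 : ZMod p) * ((c : ZMod p) * (((r ^ msum (I.erase i₀))⁻¹ * r ^ msum (J.erase i₀) : (ZMod p)ˣ) : ZMod p)) + 1 = 0 := by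
        rw [this]; rw [← heq]; congr 2
        push_cast; ring
      -- from 2c = -1 : get the unit part equals 1
      have hX : (((r ^ msum (I.erase i₀))⁻¹ * r ^ msum (J.erase i₀) : (ZMod p)ˣ) : ZMod p) = 1 := by
        have h2cv : (2 : ZMod p) * (c : ZMod p) = -1 := by linear_combination h2c
        set X := (((r ^ msum (I.erase i₀))⁻¹ * r ^ msum (J.erase i₀) : (ZMod p)ˣ) : ZMod p) with hXdef
        have : (-1 : ZMod p) * X + 1 = 0 := by
          rw [← h2cv]; linear_combination heq2
        linear_combination -this
      have hXu : ((r ^ msum (I.erase i₀))⁻¹ * r ^ msum (J.erase i₀) : (ZMod p)ˣ) = 1 :=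
        Units.ext (by simpa using hX)
      have hpow : (r : (ZMod p)ˣ) ^ msum (J.erase i₀) = r ^ msum (I.erase i₀) := by
        have := mul_eq_one_iff_eq_inv.1 hXu
        rw [inv_mul_eq_one] at hXu
        exact hXu.symm
      have hmm : msum (J.erase i₀) = msum (I.erase i₀) := by
        have hb1 : msum (J.erase i₀) ∈ Set.Iio (orderOf r) := by
          simp only [Set.mem_Iio]
          exact lt_of_lt_of_le (msum_lt _) h2K
        have hb2 : msum (I.erase i₀) ∈ Set.Iio (orderOf r) := by
          simp only [Set.mem_Iio]
          exact lt_of_lt_of_le (msum_lt _) h2K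
        exact pow_injOn_Iio_orderOf hb1 hb2 hpow
      have : J.erase i₀ = I.erase i₀ := msum_injective hmm
      apply hJI
      rw [← Finset.insert_erase hm, this, Finset.insert_erase hi₀]
    · rw [hprod J hm] at heq
      have hsq : IsSquare (((r ^ msum J : (ZMod p)ˣ) : ZMod p)) := by
        refine ⟨((h ^ msum J : (ZMod p)ˣ) : ZMod p), ?_⟩
        rw [hr]
        push_cast
        ring
      have : (((r ^ msum J : (ZMod p)ˣ) : ZMod p)) = -(2⁻¹) := by
        have h1 : (2 : ZMod p) * (((r ^ msum J : (ZMod p)ˣ) : ZMod p)) = -1 := by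
          linear_combination heq
        have h2 : (-(2⁻¹) : ZMod p) = 2⁻¹ * (-1) := by ring
        rw [h2, ← h1, ← mul_assoc, inv_mul_cancel₀ h2ne, one_mul]
      rw [this] at hsq
      exact neg_inv_two_not_square p h8 hsq
lemma aux5a : (2 * 1 + 1 : ZMod 5) ≠ 0 := by decide
lemma aux5c : (1 : ZMod 5) ≠ 0 := by decide
lemma aux5b : (4 * 1 + 1 : ZMod 5) = 0 := by decide
lemma aux17a : (2 * 5 + 1 : ZMod 17) ≠ 0 := by decide
lemma aux17b : (2 * (5 : ZMod 17) ^ 2 + 1 : ZMod 17) = 0 := by decide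

lemma coprime_prime_int {q : ℕ} (hq : q.Prime) {z : ℤ} (h : (z : ZMod q) ≠ 0) :
    Nat.Coprime (z.natAbs) q := by
  rw [Nat.coprime_comm]
  refine (hq.coprime_iff_not_dvd).2 fun hdvd => h ?_
  rw [ZMod.intCast_zmod_eq_zero_iff_dvd]
  exact Int.dvd_natAbs.1 (by exact_mod_cast Int.natCast_dvd_natCast.2 hdvd)

lemma int_gcd_nat (z : ℤ) (M : ℕ) : Int.gcd z (M : ℤ) = Nat.gcd z.natAbs M := by
  rw [Int.gcd, Int.natAbs_natCast]

lemma one_lt_gcd {q M : ℕ} (hq : 2 ≤ q) (hdM : q ∣ M) (hM : M ≠ 0) {z : ℤ}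
    (hz : (z : ZMod q) = 0) : 1 < Int.gcd z (M : ℤ) := by
  have h1 : (q : ℤ) ∣ z := (ZMod.intCast_zmod_eq_zero_iff_dvd _ _).1 hz
  have h2 : q ∣ z.natAbs := by
    exact_mod_cast Int.natCast_dvd_natCast.1 (by exact_mod_cast Int.dvd_natAbs.2 h1)
  have h3 : q ∣ Int.gcd z (M : ℤ) := by
    rw [int_gcd_nat]; exact Nat.dvd_gcd h2 hdM
  have h4 : Int.gcd z (M : ℤ) ≠ 0 := by
    rw [int_gcd_nat]
    intro h0
    exact hM (Nat.eq_zero_of_gcd_eq_zero_right h0)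
  have := Nat.le_of_dvd (Nat.pos_of_ne_zero h4) h3
  omega

theorem congruence_theorem (k : ℕ) (hk : 1 ≤ k) (hkodd : Odd k)
    (x : Fin (2 * k) → ℤ) (hS : Even (∑ i, x i)) :
    ∃ M : ℕ, 2 ≤ M ∧ ∃ a : Fin (2 * k) → ℤ,
      (∀ i, Int.gcd (a i) M = 1) ∧
      ∀ N : Fin (2 * k) → ℤ, (∀ i, 0 < N i) → (∀ i, N i ≡ a i [ZMOD (M : ℤ)]) →
        ((∀ I : Finset (Fin (2 * k)), I.Nonempty → I.card ≤ k →
            (Int.gcd (2 * (∏ i ∈ I, N i) + 1) M = 1 ↔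
              (I.card = k ∧ ∑ i ∈ I, x i = (∑ i, x i) / 2))) ∧
          (∀ i, ¬ (N i - 1 ∣ 4 * ∏ j, N j)) ∧
          1 < Int.gcd (2 * (∏ i, N i) + 1) M ∧
          1 < Int.gcd (4 * (∏ i, N i) + 1) M) := by
  classical
  set B : Finset (Finset (Fin (2 * k))) := Finset.univ.filter
    (fun I => I.Nonempty ∧ I.card ≤ k ∧ ¬ (I.card = k ∧ ∑ i ∈ I, x i = (∑ i, x i) / 2))
    with hBdef
  -- Dirichlet: infinitely many primes ≡ 5 mod 8
  have hU : IsUnit (5 : ZMod 8) := by decide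
  have hex : ∀ t : ℕ, ∃ p : ℕ, p.Prime ∧ ((p : ZMod 8) = 5) ∧ t < p := by
    intro t
    obtain ⟨p, hp, ht⟩ :=
      Set.infinite_iff_exists_gt.mp (Nat.infinite_setOfPred_prime_and_eq_mod hU) t
    exact ⟨p, hp.1, hp.2, ht⟩
  choose f hf1 hf2 hf3 using hex
  set x₀ : ℕ := 2 ^ (2 * k + 1) + 17 with hx₀
  set Pseq : ℕ → ℕ := fun t => f^[t + 1] x₀ with hPseqdef
  have hPseq_f : ∀ t, Pseq t = f (f^[t] x₀) := by
    intro t; simp only [hPseqdef]; rw [Function.iterate_succ_apply']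
  have hPseq_succ : ∀ t, Pseq (t + 1) = f (Pseq t) := by
    intro t; simp only [hPseqdef]
    rw [Function.iterate_succ_apply' f (t + 1)]
  have hPseq_prime : ∀ t, (Pseq t).Prime := fun t => by rw [hPseq_f]; exact hf1 _
  have hPseq_mod : ∀ t, Pseq t % 8 = 5 := by
    intro t
    have h1 : ((Pseq t : ℕ) : ZMod 8) = ((5 : ℕ) : ZMod 8) := by
      rw [hPseq_f]; exact_mod_cast hf2 _
    have h2 := (ZMod.natCast_eq_natCast_iff _ _ _).1 h1
    simp only [Nat.ModEq] at h2
    omega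
  have hPseq_mono : StrictMono Pseq :=
    strictMono_nat_of_lt_succ (fun t => by rw [hPseq_succ]; exact hf3 _)
  have hPseq_gt : ∀ t, x₀ < Pseq t := by
    intro t
    induction t with
    | zero => simpa [hPseqdef] using hf3 x₀
    | succ n ih => exact lt_trans ih (hPseq_mono (Nat.lt_succ_self n))
  set P : Finset (Fin (2 * k)) → ℕ := fun I => Pseq (msum I) with hPdef
  have hPprime : ∀ I, (P I).Prime := fun I => hPseq_prime _
  have hPbig : ∀ I, 2 ^ (2 * k + 1) + 17 < P I := fun I => hPseq_gt _
  have hPinj : Function.Injective P := fun I J h => msum_injective (hPseq_mono.injective h)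
  -- local residues for each bad set
  have hloc : ∀ I ∈ B, ∃ b : Fin (2 * k) → ZMod (P I),
      (∀ i, b i ≠ 0) ∧ (2 * ∏ i ∈ I, b i + 1 = 0) ∧
      (∀ J : Finset (Fin (2 * k)), J ≠ I → 2 * ∏ i ∈ J, b i + 1 ≠ 0) := by
    intro I hIB
    have hne : I.Nonempty := by
      rw [hBdef, Finset.mem_filter] at hIB
      exact hIB.2.1
    exact local_residues (P I) (hPprime I) (hPseq_mod _) (by have := hPbig I; omega) I hne
  choose b hb0 hbI hbJ using hloc
  -- the modulus-17 residue
  haveI hf17 : Fact (Nat.Prime 17) := ⟨by norm_num⟩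
  have hcop : (Nat.card (ZMod 17)ˣ).Coprime k := by
    have hcard17 : Nat.card (ZMod 17)ˣ = 16 := by
      rw [Nat.card_eq_fintype_card, ZMod.card_units]
    rw [hcard17]
    have h2 : Nat.Coprime 2 k :=
      (Nat.prime_two.coprime_iff_not_dvd).2 (by rcases hkodd with ⟨t, rfl⟩; omega)
    have h16 : (16 : ℕ) = 2 ^ 4 := by norm_num
    rw [h16]
    exact Nat.Coprime.pow_left 4 h2
  set five : (ZMod 17)ˣ := ZMod.unitOfCoprime 5 (by norm_num) with hfive
  set s : (ZMod 17)ˣ := (powCoprime hcop).symm five with hsdef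
  have hsk : ((s : ZMod 17)) ^ k = 5 := by
    have h1 : s ^ k = five := by
      have h2 := (powCoprime hcop).apply_symm_apply five
      rwa [powCoprime_apply] at h2
    calc ((s : ZMod 17)) ^ k = ((s ^ k : (ZMod 17)ˣ) : ZMod 17) := by push_cast; ring
    _ = ((five : (ZMod 17)ˣ) : ZMod 17) := by rw [h1]
    _ = 5 := by rw [hfive, ZMod.coe_unitOfCoprime]; norm_num
  obtain ⟨w, hw5, hw17⟩ := crt_two (m := 5) (n := 17) (by norm_num) 1 (((s : ZMod 17).val : ℤ))
  -- CRT for the residues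
  have hco : ∀ i ∈ (Finset.univ : Finset (Option (Finset (Fin (2 * k))))), ∀ j ∈ Finset.univ,
      i ≠ j → Nat.Coprime ((fun o : Option (Finset (Fin (2 * k))) =>
        o.elim 85 (fun I => if I ∈ B then P I else 1)) i)
        ((fun o : Option (Finset (Fin (2 * k))) =>
        o.elim 85 (fun I => if I ∈ B then P I else 1)) j) := by
    have hP85 : ∀ I, Nat.Coprime 85 (if I ∈ B then P I else 1) := by
      intro I
      split
      · rw [Nat.coprime_comm]
        refine ((hPprime I).coprime_iff_not_dvd).2 fun hdvd => ?_
        have h85 : (85 : ℕ) = 5 * 17 := by norm_num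
        rw [h85] at hdvd
        have hPI := hPbig I
        have h2 : (2:ℕ) ≤ 2 ^ (2*k+1) := by
          calc (2:ℕ) = 2^1 := by norm_num
          _ ≤ 2 ^ (2*k+1) := Nat.pow_le_pow_right (by norm_num) (by omega)
        rcases ((hPprime I).dvd_mul).1 hdvd with h | h
        · have := Nat.le_of_dvd (by norm_num) h; omega
        · have := Nat.le_of_dvd (by norm_num) h; omega
      · exact Nat.coprime_one_right _
    intro i _ j _ hij
    match i, j with
    | none, none => exact absurd rfl hij
    | none, some J => exact hP85 J
    | some I, none => exact (hP85 I).symm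
    | some I, some J =>
      have hIJ : I ≠ J := fun h => hij (by rw [h])
      simp only [Option.elim]
      split
      · split
        · refine (Nat.coprime_primes (hPprime I) (hPprime J)).2 fun h => hIJ (hPinj h)
        · exact Nat.coprime_one_right _
      · exact Nat.coprime_one_left _
  have hAex : ∀ i : Fin (2 * k), ∃ Az : ℤ, (Az ≡ w [ZMOD ((85 : ℕ) : ℤ)]) ∧
      ∀ I (hIB : I ∈ B), Az ≡ ((b I hIB i).val : ℤ) [ZMOD ((P I : ℕ) : ℤ)] := by
    intro i
    obtain ⟨Az, hAz⟩ := crt_finset (ι := Option (Finset (Fin (2 * k)))) Finset.univ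
      (fun o => o.elim 85 (fun I => if I ∈ B then P I else 1)) hco
      (fun o => o.elim w (fun I => if h : I ∈ B then ((b I h i).val : ℤ) else 0))
    refine ⟨Az, ?_, ?_⟩
    · simpa using hAz none (Finset.mem_univ _)
    · intro I hIB
      have := hAz (some I) (Finset.mem_univ _)
      simpa [hIB] using this
  choose A hA85 hAP0 using hAex
  set R : ℕ := ∏ I ∈ B, P I with hRdef
  set M : ℕ := 5 * (17 * R) with hMdef
  have hR0 : 0 < R := Finset.prod_pos (fun I _ => (hPprime I).pos)
  have hM0 : M ≠ 0 := by positivity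
  have hd5 : (5 : ℕ) ∣ M := dvd_mul_right 5 _
  have hd17 : (17 : ℕ) ∣ M := (dvd_mul_right 17 R).mul_left 5
  have hdP : ∀ I ∈ B, P I ∣ M := fun I hIB =>
    ((Finset.dvd_prod_of_mem P hIB).mul_left 17).mul_left 5
  have hd85 : (85 : ℕ) ∣ M := ⟨R, by rw [hMdef]; ring⟩
  -- residues of A
  have hA5 : ∀ i, ((A i : ℤ) : ZMod 5) = 1 := by
    intro i
    have h1 : A i ≡ 1 [ZMOD ((5 : ℕ) : ℤ)] :=
      ((hA85 i).of_dvd (by norm_num)).trans hw5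
    have h2 := (ZMod.intCast_eq_intCast_iff _ _ _).2 h1
    simpa using h2
  have hA17 : ∀ i, ((A i : ℤ) : ZMod 17) = (s : ZMod 17) := by
    intro i
    have h1 : A i ≡ (((s : ZMod 17).val : ℤ)) [ZMOD ((17 : ℕ) : ℤ)] :=
      ((hA85 i).of_dvd (by norm_num)).trans hw17
    have h2 := (ZMod.intCast_eq_intCast_iff _ _ _).2 h1
    simpa [ZMod.natCast_val, ZMod.cast_id] using h2
  have hAP : ∀ I (hIB : I ∈ B), ∀ i, ((A i : ℤ) : ZMod (P I)) = b I hIB i := by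
    intro I hIB i
    haveI : NeZero (P I) := ⟨(hPprime I).pos.ne'⟩
    have h2 := (ZMod.intCast_eq_intCast_iff _ _ _).2 (hAP0 i I hIB)
    simpa [ZMod.natCast_val, ZMod.cast_id] using h2
  refine ⟨M, ?_, A, ?_, ?_⟩
  · show 2 ≤ 5 * (17 * R)
    calc (2:ℕ) ≤ 5 * (17 * 1) := by norm_num
    _ ≤ 5 * (17 * R) := by gcongr; exact hR0
  · -- gcd (A i) M = 1
    intro i
    rw [int_gcd_nat, hMdef]
    refine Nat.Coprime.mul_right ?_ (Nat.Coprime.mul_right ?_ ?_)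
    · refine coprime_prime_int (by norm_num) ?_
      rw [hA5 i]
      exact aux5c
    · exact coprime_prime_int hf17.out (by rw [hA17 i]; exact Units.ne_zero s)
    · exact Nat.Coprime.prod_right fun I hIB =>
        coprime_prime_int (hPprime I) (by rw [hAP I hIB i]; exact hb0 I hIB i)
  · intro N hNpos hNmod
    have hmodq : ∀ q : ℕ, q ∣ M → ∀ i, N i ≡ A i [ZMOD (q : ℤ)] := by
      intro q hq i
      exact (hNmod i).of_dvd (by exact_mod_cast Int.natCast_dvd_natCast.2 hq)
    have hN5 : ∀ i, ((N i : ℤ) : ZMod 5) = 1 := fun i =>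
      ((ZMod.intCast_eq_intCast_iff _ _ _).2 (hmodq 5 hd5 i)).trans (hA5 i)
    have hN17 : ∀ i, ((N i : ℤ) : ZMod 17) = (s : ZMod 17) := fun i =>
      ((ZMod.intCast_eq_intCast_iff _ _ _).2 (hmodq 17 hd17 i)).trans (hA17 i)
    have hNP : ∀ I (hIB : I ∈ B), ∀ i, ((N i : ℤ) : ZMod (P I)) = b I hIB i := fun I hIB i =>
      ((ZMod.intCast_eq_intCast_iff _ _ _).2 (hmodq (P I) (hdP I hIB) i)).trans (hAP I hIB i)
    refine ⟨?_, ?_, ?_, ?_⟩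
    · -- condition (i)
      intro I hne hcard
      constructor
      · intro hgcd
        by_contra hng
        have hIB : I ∈ B := by
          rw [hBdef, Finset.mem_filter]
          exact ⟨Finset.mem_univ I, hne, hcard, hng⟩
        have hz : ((2 * (∏ i ∈ I, N i) + 1 : ℤ) : ZMod (P I)) = 0 := by
          push_cast
          rw [Finset.prod_congr rfl (fun i _ => hNP I hIB i)]
          exact hbI I hIB
        have := one_lt_gcd (hPprime I).two_le (hdP I hIB) hM0 hz
        omega
      · rintro ⟨hck, hsum⟩
        have hInB : I ∉ B := by
          rw [hBdef, Finset.mem_filter]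
          rintro ⟨-, -, -, hng⟩
          exact hng ⟨hck, hsum⟩
        rw [int_gcd_nat, hMdef]
        refine Nat.Coprime.mul_right ?_ (Nat.Coprime.mul_right ?_ ?_)
        · refine coprime_prime_int (by norm_num) ?_
          push_cast
          rw [Finset.prod_congr rfl (fun i _ => hN5 i), Finset.prod_const_one]
          exact aux5a
        · refine coprime_prime_int hf17.out ?_
          push_cast
          rw [Finset.prod_congr rfl (fun i _ => hN17 i), Finset.prod_const, hck, hsk]
          exact aux17a
        · refine Nat.Coprime.prod_right fun I' hI'B => coprime_prime_int (hPprime I') ?_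
          push_cast
          rw [Finset.prod_congr rfl (fun i _ => hNP I' hI'B i)]
          exact hbJ I' hI'B I (fun h => hInB (h ▸ hI'B))
    · -- condition (ii)
      intro i hdvd
      have h5d : ((5:ℕ) : ℤ) ∣ (N i - 1) := by
        rw [← ZMod.intCast_zmod_eq_zero_iff_dvd]
        push_cast
        rw [hN5 i]
        ring
      have h5d2 : ((5:ℕ) : ℤ) ∣ 4 * ∏ j, N j := h5d.trans hdvd
      have hzero : ((4 * ∏ j, N j : ℤ) : ZMod 5) = 0 :=
        (ZMod.intCast_zmod_eq_zero_iff_dvd _ _).2 (by exact_mod_cast h5d2)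
      rw [show ((4 * ∏ j, N j : ℤ) : ZMod 5) = 4 * ∏ j, ((N j : ℤ) : ZMod 5) by push_cast; ring,
        Finset.prod_congr rfl (fun j _ => hN5 j), Finset.prod_const_one] at hzero
      revert hzero
      decide
    · -- condition (iii) first
      refine one_lt_gcd (by norm_num) hd17 hM0 ?_
      push_cast
      rw [Finset.prod_congr rfl (fun i (_ : i ∈ Finset.univ) => hN17 i), Finset.prod_const]
      rw [Finset.card_univ, Fintype.card_fin, mul_comm 2 k, pow_mul, hsk]
      exact aux17b
    · -- condition (iii) second
      refine one_lt_gcd (by norm_num) hd5 hM0 ?_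
      push_cast
      rw [Finset.prod_congr rfl (fun i (_ : i ∈ Finset.univ) => hN5 i), Finset.prod_const_one]
      exact aux5b
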